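/- Let g(s) = q^{(τ+1)s − τ − 1/2}. Then on V₋ the operator identity W̄₀ ∘ T_{−τ/(τ+1)} = (M_g ∘ T_{−τ/(τ+1)} − T_{1/(τ+1)}) ∘ W̄₀ holds, i.e. the initial value −L̄₀^{−1/(τ^{−1}+1)} = −W̄₀ ∘ T_{−τ/(τ+1)} ∘ W̄₀^{−1} equals (1 − q^{(τ+1)s − τ − 1/2} Λ^{−1}) Λ^{1/(τ+1)} (note −1/(τ^{−1}+1) = −τ/(τ+1)). -/

import Mathlib

/-- `c_0 = 1`, `c_n = q^{n/2} / ∏_{k=1}^n (1 − q^k)`, the coefficients of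
`∏_{i=1}^∞ (1 − q^{i−1/2} x)^{−1} = Σ_{n≥0} c_n x^n`. -/
noncomputable def ccoef (q : ℝ) (n : ℕ) : ℝ :=
  q ^ ((n : ℝ) / 2) / ∏ k ∈ Finset.range n, (1 - q ^ (k + 1))

/-- The dressing operator
`(W̄₀ f)(s) = q^{(τ+1)(s−1/2)²/2} Σ_{n≥0} c_n q^{(τ⁻¹+1)(s+n−1/2)²/2} f(s + n)`,
realizing `q^{(τ+1)(s−1/2)²/2} ∏_{i=1}^∞ (1 − q^{i−1/2} Λ)^{−1} q^{(τ⁻¹+1)(s−1/2)²/2}`;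
on functions whose support is bounded above the sum has finitely many
nonzero terms. -/
noncomputable def Wb0 (q τ : ℝ) (f : ℝ → ℂ) : ℝ → ℂ := fun s =>
  ((q ^ ((τ + 1) * (s - 1/2) ^ 2 / 2) : ℝ) : ℂ) *
    ∑ᶠ n : ℕ,
      ((ccoef q n : ℝ) : ℂ) *
        ((q ^ ((τ⁻¹ + 1) * (s + (n : ℝ) - 1/2) ^ 2 / 2) : ℝ) : ℂ) *
        f (s + (n : ℝ))

lemma prod_ne (q : ℝ) (hq0 : 0 < q) (hq1 : q < 1) (n : ℕ) :
    ∏ k ∈ Finset.range n, (1 - q ^ (k + 1)) ≠ 0 := by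
  apply Finset.prod_ne_zero_iff.2
  intro k _
  have : q ^ (k + 1) < 1 := pow_lt_one₀ hq0.le hq1 (Nat.succ_ne_zero k)
  linarith

lemma ccoef_succ (q : ℝ) (hq0 : 0 < q) (hq1 : q < 1) (n : ℕ) :
    ccoef q (n + 1) * (1 - q ^ (n + 1)) = ccoef q n * q ^ ((1:ℝ)/2) := by
  unfold ccoef
  rw [Finset.prod_range_succ]
  have h1 : ((n + 1 : ℕ) : ℝ) / 2 = (n : ℝ) / 2 + 1/2 := by push_cast; ring
  rw [h1, Real.rpow_add hq0]
  have h2 : 1 - q ^ (n + 1) ≠ 0 := by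
    have : q ^ (n + 1) < 1 := pow_lt_one₀ hq0.le hq1 (Nat.succ_ne_zero n)
    linarith
  field_simp [prod_ne q hq0 hq1 n, h2]

lemma keyR0 (q τ : ℝ) (hq0 : 0 < q) (hτ0 : τ ≠ 0) (hτ1 : τ + 1 ≠ 0) (s : ℝ) :
    q ^ ((τ+1)*s - τ - 1/2) * q ^ ((τ+1)*(s - τ/(τ+1) - 1/2)^2/2)
      * q ^ ((τ⁻¹+1)*(s - τ/(τ+1) - 1/2)^2/2)
    = q ^ ((τ+1)*(s-1/2)^2/2) * q ^ ((τ⁻¹+1)*(s-1/2)^2/2) := by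
  rw [← Real.rpow_add hq0, ← Real.rpow_add hq0, ← Real.rpow_add hq0]
  congr 1
  field_simp
  ring

lemma keyR (q τ : ℝ) (hq0 : 0 < q) (hq1 : q < 1) (hτ0 : τ ≠ 0) (hτ1 : τ + 1 ≠ 0)
    (s : ℝ) (n : ℕ) :
    q ^ ((τ+1)*s - τ - 1/2) * q ^ ((τ+1)*(s - τ/(τ+1) - 1/2)^2/2)
        * (ccoef q (n+1) * q ^ ((τ⁻¹+1)*(s - τ/(τ+1) + ((n:ℝ)+1) - 1/2)^2/2))
      - q ^ ((τ+1)*(s-1/2)^2/2)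
        * (ccoef q (n+1) * q ^ ((τ⁻¹+1)*(s + ((n:ℝ)+1) - 1/2)^2/2))
    = q ^ ((τ+1)*(s + 1/(τ+1) - 1/2)^2/2)
        * (ccoef q n * q ^ ((τ⁻¹+1)*(s + 1/(τ+1) + (n:ℝ) - 1/2)^2/2)) := by
  set E1 : ℝ := (τ+1)*(s-1/2)^2/2 + (τ⁻¹+1)*(s + ((n:ℝ)+1) - 1/2)^2/2 with hE1
  have h3 : ((τ+1)*s - τ - 1/2) + ((τ+1)*(s - τ/(τ+1) - 1/2)^2/2
      + (τ⁻¹+1)*(s - τ/(τ+1) + ((n:ℝ)+1) - 1/2)^2/2) = E1 - ((n:ℝ)+1) := by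
    rw [hE1]; field_simp; ring
  have h2 : (τ+1)*(s + 1/(τ+1) - 1/2)^2/2 + (τ⁻¹+1)*(s + 1/(τ+1) + (n:ℝ) - 1/2)^2/2
      = E1 + 1/2 - ((n:ℝ)+1) := by
    rw [hE1]; field_simp; ring
  have l3 : q ^ ((τ+1)*s - τ - 1/2) * q ^ ((τ+1)*(s - τ/(τ+1) - 1/2)^2/2)
      * q ^ ((τ⁻¹+1)*(s - τ/(τ+1) + ((n:ℝ)+1) - 1/2)^2/2) = q ^ (E1 - ((n:ℝ)+1)) := by
    rw [← Real.rpow_add hq0, ← Real.rpow_add hq0, ← h3]; ring_nf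
  have l2 : q ^ ((τ+1)*(s + 1/(τ+1) - 1/2)^2/2)
      * q ^ ((τ⁻¹+1)*(s + 1/(τ+1) + (n:ℝ) - 1/2)^2/2) = q ^ (E1 + 1/2 - ((n:ℝ)+1)) := by
    rw [← Real.rpow_add hq0, ← h2]
  have l1 : q ^ ((τ+1)*(s-1/2)^2/2) * q ^ ((τ⁻¹+1)*(s + ((n:ℝ)+1) - 1/2)^2/2)
      = q ^ E1 := by rw [← Real.rpow_add hq0, hE1]
  calc q ^ ((τ+1)*s - τ - 1/2) * q ^ ((τ+1)*(s - τ/(τ+1) - 1/2)^2/2)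
        * (ccoef q (n+1) * q ^ ((τ⁻¹+1)*(s - τ/(τ+1) + ((n:ℝ)+1) - 1/2)^2/2))
      - q ^ ((τ+1)*(s-1/2)^2/2)
        * (ccoef q (n+1) * q ^ ((τ⁻¹+1)*(s + ((n:ℝ)+1) - 1/2)^2/2))
      = ccoef q (n+1) * (q ^ (E1 - ((n:ℝ)+1)) - q ^ E1) := by
        rw [← l3, ← l1]; ring
    _ = q ^ (E1 + 1/2 - ((n:ℝ)+1)) * ccoef q n := by
        have hqn : (0:ℝ) < q ^ (n+1) := pow_pos hq0 _
        have hqn1 : 1 - q ^ (n+1) ≠ 0 := by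
          have : q ^ (n + 1) < 1 := pow_lt_one₀ hq0.le hq1 (Nat.succ_ne_zero n)
          linarith
        have hc := ccoef_succ q hq0 hq1 n
        have hcast : ((n:ℝ)+1) = ((n+1 : ℕ) : ℝ) := by push_cast; ring
        have e3 : q ^ (E1 - ((n:ℝ)+1)) = q ^ E1 / q ^ (n+1 : ℕ) := by
          rw [Real.rpow_sub hq0, hcast, Real.rpow_natCast]
        have e2 : q ^ (E1 + 1/2 - ((n:ℝ)+1)) = q ^ E1 * q ^ ((1:ℝ)/2) / q ^ (n+1 : ℕ) := by
          rw [show E1 + 1/2 - ((n:ℝ)+1) = (E1 + 1/2) - ((n:ℝ)+1) by ring,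
            Real.rpow_sub hq0, Real.rpow_add hq0, hcast, Real.rpow_natCast]
        rw [e3, e2]
        field_simp
        linear_combination hc
    _ = q ^ ((τ+1)*(s + 1/(τ+1) - 1/2)^2/2)
        * (ccoef q n * q ^ ((τ⁻¹+1)*(s + 1/(τ+1) + (n:ℝ) - 1/2)^2/2)) := by
        rw [← l2]; ring

/-- On `V₋` (functions with support bounded above),
`W̄₀ ∘ T_{−τ/(τ+1)} = (M_g ∘ T_{−τ/(τ+1)} − T_{1/(τ+1)}) ∘ W̄₀` with
`g(s) = q^{(τ+1)s − τ − 1/2}`; i.e.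
`−L̄₀^{−1/(τ⁻¹+1)} = −W̄₀ ∘ T_{−τ/(τ+1)} ∘ W̄₀^{−1} = (1 − q^{(τ+1)s − τ − 1/2} Λ^{−1}) Λ^{1/(τ+1)}`
(note `−1/(τ⁻¹+1) = −τ/(τ+1)`). -/
theorem Lbar0_fractional_power_formula (q τ : ℝ) (hq0 : 0 < q) (hq1 : q < 1)
    (hτ0 : τ ≠ 0) (hτ1 : τ ≠ -1)
    (f : ℝ → ℂ) (hf : BddAbove (Function.support f)) (s : ℝ) :
    Wb0 q τ (fun t => f (t - τ / (τ + 1))) s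
      = ((q ^ ((τ + 1) * s - τ - 1/2) : ℝ) : ℂ) * Wb0 q τ f (s - τ / (τ + 1)) -
          Wb0 q τ f (s + 1 / (τ + 1)) := by
  have hτ1' : τ + 1 ≠ 0 := fun h => hτ1 (by linarith)
  obtain ⟨M, hM⟩ := hf
  have hfz : ∀ t : ℝ, M < t → f t = 0 := by
    intro t ht
    by_contra h
    exact absurd (hM (Function.mem_support.2 h)) (not_le.2 ht)
  obtain ⟨N, hN⟩ := exists_nat_gt (M - s + |τ/(τ+1)| + |1/(τ+1)| + 1)
  simp only [Wb0]
  -- support subsets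
  have hS1 : Function.support (fun n : ℕ =>
      ((ccoef q n : ℝ) : ℂ) *
        ((q ^ ((τ⁻¹ + 1) * (s + (n : ℝ) - 1/2) ^ 2 / 2) : ℝ) : ℂ) *
        (fun t => f (t - τ / (τ + 1))) (s + (n : ℝ)))
      ⊆ ↑(Finset.range (N+1)) := by
    intro n hn
    simp only [Function.mem_support, ne_eq] at hn
    have hfne : f (s + (n : ℝ) - τ/(τ+1)) ≠ 0 := by
      intro h; apply hn; simp only [h, mul_zero]
    have h1 : s + (n : ℝ) - τ/(τ+1) ≤ M := hM (Function.mem_support.2 hfne)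
    have h2 : (n : ℝ) < N := by
      have := le_abs_self (τ/(τ+1)); have := abs_nonneg (1/(τ+1)); linarith
    simp only [Finset.coe_range, Set.mem_Iio]
    exact lt_trans (Nat.cast_lt.1 h2) (Nat.lt_succ_self N)
  have hS2 : Function.support (fun n : ℕ =>
      ((ccoef q n : ℝ) : ℂ) *
        ((q ^ ((τ⁻¹ + 1) * (s - τ/(τ+1) + (n : ℝ) - 1/2) ^ 2 / 2) : ℝ) : ℂ) *
        f (s - τ/(τ+1) + (n : ℝ)))
      ⊆ ↑(Finset.range (N+1)) := by
    intro n hn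
    simp only [Function.mem_support, ne_eq] at hn
    have hfne : f (s - τ/(τ+1) + (n : ℝ)) ≠ 0 := by
      intro h; apply hn; simp only [h, mul_zero]
    have h1 : s - τ/(τ+1) + (n : ℝ) ≤ M := hM (Function.mem_support.2 hfne)
    have h2 : (n : ℝ) < N := by
      have := le_abs_self (τ/(τ+1)); have := abs_nonneg (1/(τ+1)); linarith
    simp only [Finset.coe_range, Set.mem_Iio]
    exact lt_trans (Nat.cast_lt.1 h2) (Nat.lt_succ_self N)
  have hS3 : Function.support (fun n : ℕ =>
      ((ccoef q n : ℝ) : ℂ) *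
        ((q ^ ((τ⁻¹ + 1) * (s + 1/(τ+1) + (n : ℝ) - 1/2) ^ 2 / 2) : ℝ) : ℂ) *
        f (s + 1/(τ+1) + (n : ℝ)))
      ⊆ ↑(Finset.range N) := by
    intro n hn
    simp only [Function.mem_support, ne_eq] at hn
    have hfne : f (s + 1/(τ+1) + (n : ℝ)) ≠ 0 := by
      intro h; apply hn; simp only [h, mul_zero]
    have h1 : s + 1/(τ+1) + (n : ℝ) ≤ M := hM (Function.mem_support.2 hfne)
    have h2 : (n : ℝ) < N := by
      have := neg_le_abs (1/(τ+1)); have := abs_nonneg (τ/(τ+1)); linarith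
    simp only [Finset.coe_range, Set.mem_Iio]
    exact Nat.cast_lt.1 h2
  rw [finsum_eq_sum_of_support_subset _ hS1, finsum_eq_sum_of_support_subset _ hS2,
    finsum_eq_sum_of_support_subset _ hS3, Finset.mul_sum, Finset.mul_sum,
    Finset.mul_sum, Finset.mul_sum]
  have hmain : ∑ n ∈ Finset.range (N+1),
      (((q ^ ((τ + 1) * s - τ - 1/2) : ℝ) : ℂ) *
        (((q ^ ((τ + 1) * (s - τ/(τ+1) - 1/2) ^ 2 / 2) : ℝ) : ℂ) *
          (((ccoef q n : ℝ) : ℂ) *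
            ((q ^ ((τ⁻¹ + 1) * (s - τ/(τ+1) + (n : ℝ) - 1/2) ^ 2 / 2) : ℝ) : ℂ) *
            f (s - τ/(τ+1) + (n : ℝ))))
       - ((q ^ ((τ + 1) * (s - 1/2) ^ 2 / 2) : ℝ) : ℂ) *
          (((ccoef q n : ℝ) : ℂ) *
            ((q ^ ((τ⁻¹ + 1) * (s + (n : ℝ) - 1/2) ^ 2 / 2) : ℝ) : ℂ) *
            f (s + (n : ℝ) - τ/(τ+1))))
      = ∑ n ∈ Finset.range N,
        ((q ^ ((τ + 1) * (s + 1/(τ+1) - 1/2) ^ 2 / 2) : ℝ) : ℂ) *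
          (((ccoef q n : ℝ) : ℂ) *
            ((q ^ ((τ⁻¹ + 1) * (s + 1/(τ+1) + (n : ℝ) - 1/2) ^ 2 / 2) : ℝ) : ℂ) *
            f (s + 1/(τ+1) + (n : ℝ))) := by
    rw [Finset.sum_range_succ']
    have h0 : ((q ^ ((τ + 1) * s - τ - 1/2) : ℝ) : ℂ) *
        (((q ^ ((τ + 1) * (s - τ/(τ+1) - 1/2) ^ 2 / 2) : ℝ) : ℂ) *
          (((ccoef q 0 : ℝ) : ℂ) *
            ((q ^ ((τ⁻¹ + 1) * (s - τ/(τ+1) + ((0:ℕ) : ℝ) - 1/2) ^ 2 / 2) : ℝ) : ℂ) *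
            f (s - τ/(τ+1) + ((0:ℕ) : ℝ))))
       - ((q ^ ((τ + 1) * (s - 1/2) ^ 2 / 2) : ℝ) : ℂ) *
          (((ccoef q 0 : ℝ) : ℂ) *
            ((q ^ ((τ⁻¹ + 1) * (s + ((0:ℕ) : ℝ) - 1/2) ^ 2 / 2) : ℝ) : ℂ) *
            f (s + ((0:ℕ) : ℝ) - τ/(τ+1))) = 0 := by
      have K := keyR0 q τ hq0 hτ0 hτ1' s
      have K' : ((q ^ ((τ+1)*s - τ - 1/2) * q ^ ((τ+1)*(s - τ/(τ+1) - 1/2)^2/2)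
          * q ^ ((τ⁻¹+1)*(s - τ/(τ+1) - 1/2)^2/2) : ℝ) : ℂ)
          = ((q ^ ((τ+1)*(s-1/2)^2/2) * q ^ ((τ⁻¹+1)*(s-1/2)^2/2) : ℝ) : ℂ) := by
        exact_mod_cast congrArg Complex.ofReal K
      have hc0 : ccoef q 0 = 1 := by simp [ccoef]
      simp only [Nat.cast_zero, add_zero, hc0]
      push_cast at K' ⊢
      linear_combination (f (s - τ/(τ+1))) * K'
    rw [h0, add_zero]
    apply Finset.sum_congr rfl
    intro n _
    have K := keyR q τ hq0 hq1 hτ0 hτ1' s n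
    have K' : ((q ^ ((τ+1)*s - τ - 1/2) * q ^ ((τ+1)*(s - τ/(τ+1) - 1/2)^2/2)
        * (ccoef q (n+1) * q ^ ((τ⁻¹+1)*(s - τ/(τ+1) + ((n:ℝ)+1) - 1/2)^2/2))
      - q ^ ((τ+1)*(s-1/2)^2/2)
        * (ccoef q (n+1) * q ^ ((τ⁻¹+1)*(s + ((n:ℝ)+1) - 1/2)^2/2)) : ℝ) : ℂ)
        = ((q ^ ((τ+1)*(s + 1/(τ+1) - 1/2)^2/2)
        * (ccoef q n * q ^ ((τ⁻¹+1)*(s + 1/(τ+1) + (n:ℝ) - 1/2)^2/2)) : ℝ) : ℂ) := by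
      exact_mod_cast congrArg Complex.ofReal K
    push_cast at K'
    have harg2 : s - τ/(τ+1) + ((n:ℝ)+1) = s + ((n:ℝ)+1) - τ/(τ+1) := by ring
    have harg3 : s + 1/(τ+1) + (n:ℝ) = s + ((n:ℝ)+1) - τ/(τ+1) := by
      field_simp
      ring
    simp only [Nat.cast_add, Nat.cast_one]
    rw [congrArg f harg2, congrArg f harg3,
      show s + (↑n + 1 : ℝ) - τ/(τ+1) = s + ((n:ℝ)+1) - τ/(τ+1) from rfl]
    linear_combination (f (s + ((n:ℝ)+1) - τ/(τ+1))) * K'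
  rw [Finset.sum_sub_distrib] at hmain
  linear_combination -hmain
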